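/- Let λ = s/r and λ' = s'/r' be distinct rational numbers in lowest terms, with r, r' ≥ 1. Let L be the fraction field of the Witt vectors over a perfect field k of characteristic p, with Frobenius σ. Suppose a ∈ L satisfies p^{s r'} · a = σ^{r r'}(a) · p^{r s'}. Then a = 0. -/

import Mathlib

noncomputable def fracWittFrobenius (p : ℕ) [Fact p.Prime] (k : Type*) [Field k] [CharP k p]
    [PerfectRing k p] :
    FractionRing (WittVector p k) ≃+* FractionRing (WittVector p k) :=
  IsFractionRing.ringEquivOfRingEquiv (WittVector.frobeniusEquiv p k)

section aux
variable (p : ℕ) [Fact p.Prime] (k : Type*) [Field k] [CharP k p] [PerfectRing k p]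

local notation "R" => WittVector p k
local notation "L" => FractionRing (WittVector p k)

lemma frac_comm_zpow (m : ℤ) (x : R) :
    (fracWittFrobenius p k ^ m) (algebraMap R L x)
      = algebraMap R L ((WittVector.frobeniusEquiv p k ^ m) x) := by
  have base : ∀ x : R, (fracWittFrobenius p k) (algebraMap R L x)
      = algebraMap R L ((WittVector.frobeniusEquiv p k) x) :=
    fun x => IsFractionRing.ringEquivOfRingEquiv_algebraMap _ x
  have inv : ∀ x : R, (fracWittFrobenius p k)⁻¹ (algebraMap R L x)
      = algebraMap R L ((WittVector.frobeniusEquiv p k)⁻¹ x) := by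
    intro x
    have := base ((WittVector.frobeniusEquiv p k)⁻¹ x)
    rw [show (WittVector.frobeniusEquiv p k) ((WittVector.frobeniusEquiv p k)⁻¹ x) = x from
      (WittVector.frobeniusEquiv p k).apply_symm_apply x] at this
    rw [← this]
    exact ((fracWittFrobenius p k).symm_apply_apply _)
  induction m using Int.induction_on generalizing x with
  | zero => rfl
  | succ n ih =>
      rw [zpow_add_one]
      show (fracWittFrobenius p k ^ (n:ℤ)) ((fracWittFrobenius p k) _) = _
      rw [base, ih, zpow_add_one]
      rfl
  | pred n ih =>
      rw [sub_eq_add_neg, zpow_add, zpow_neg_one]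
      show (fracWittFrobenius p k ^ (-n:ℤ)) ((fracWittFrobenius p k)⁻¹ _) = _
      rw [inv, ih, zpow_add, zpow_neg_one]
      rfl

lemma aux1 (φ : R ≃+* R) (w : R) (hw : w ≠ 0) (t : ℕ) (ht : 1 ≤ t)
    (h : (p : R) ^ t * w = φ w) : False := by
  obtain ⟨m, v, rfl⟩ := WittVector.exists_eq_pow_p_mul' w hw
  have hφ : φ ((p : R) ^ m * v) = (p : R) ^ m * φ v := by
    rw [map_mul, map_pow, map_natCast]
  rw [hφ] at h
  have hp0 : (p : R) ^ m ≠ 0 :=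
    pow_ne_zero _ (WittVector.irreducible p (k := k)).ne_zero
  have h2 : (p : R) ^ t * (v : R) = φ v := by
    have := h
    rw [show (p : R) ^ t * ((p : R) ^ m * v) = (p : R) ^ m * ((p : R) ^ t * v) by ring] at this
    exact mul_left_cancel₀ hp0 this
  have hdvd : (p : R) ∣ φ v := by
    refine ⟨(p : R) ^ (t - 1) * v, ?_⟩
    rw [← h2, ← mul_assoc, ← pow_succ']
    congr 2
    omega
  exact (WittVector.irreducible p (k := k)).not_isUnit
    (isUnit_of_dvd_unit hdvd ((φ : R →+* R).isUnit_map v.isUnit))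

lemma key_lemma (e : ℤ) (n : ℤ) (hn : n ≠ 0) (a : L)
    (key : (p : L) ^ n * a = (fracWittFrobenius p k ^ e) a) : a = 0 := by
  by_contra ha0
  set F := algebraMap R L with hF
  set φ := WittVector.frobeniusEquiv p k ^ e with hφ
  have hinj : Function.Injective F := IsFractionRing.injective _ _
  have hpR : (p : R) ≠ 0 := (WittVector.irreducible p (k := k)).ne_zero
  have hpL : (p : L) ≠ 0 := by
    have h1 : F (p : R) = (p : L) := map_natCast _ _
    rw [← h1]
    exact fun h => hpR (hinj (by rw [h, map_zero]))
  have comm : ∀ x : R, (fracWittFrobenius p k ^ e) (F x) = F (φ x) :=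
    fun x => frac_comm_zpow p k e x
  -- write a = F w * p^(-m)
  obtain ⟨x0, y, hy, hxy⟩ := IsFractionRing.div_surjective (A := R) a
  have hy0 : y ≠ 0 := nonZeroDivisors.ne_zero hy
  obtain ⟨m, u, rfl⟩ := WittVector.exists_eq_pow_p_mul' y hy0
  have huinv : F ↑u⁻¹ = (F ↑u)⁻¹ :=
    eq_inv_of_mul_eq_one_left (by rw [← map_mul, Units.inv_mul, map_one])
  obtain ⟨w, hw0, ha'⟩ : ∃ w : R, w ≠ 0 ∧ a = F w * (p : L) ^ (-(m : ℤ)) := by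
    refine ⟨x0 * ↑u⁻¹, ?_, ?_⟩
    · intro h
      apply ha0
      rw [← hxy]
      have : x0 = 0 := by
        have := congrArg (· * (u : R)) h
        simpa [mul_assoc] using this
      simp [this]
    · rw [← hxy, map_mul, map_pow, map_natCast, map_mul, huinv, zpow_neg, zpow_natCast]
      have hu0 : F ↑u ≠ 0 := fun h => u.ne_zero (hinj (by rw [h, map_zero]))
      field_simp
      ring
  -- substitute into key
  rw [ha', map_mul, comm, map_zpow₀, map_natCast] at key
  have key2 : (p : L) ^ n * F w = F (φ w) := by
    refine mul_right_cancel₀ (zpow_ne_zero (-(m : ℤ)) hpL) ?_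
    linear_combination key
  rcases hn.lt_or_gt with hneg | hpos
  · -- n < 0 : w = p^t * φ w
    set t := (-n).toNat with hts
    have ht1 : 1 ≤ t := by omega
    have hnt : (p : L) ^ (t : ℕ) = (p : L) ^ (-n) := by
      rw [← zpow_natCast, hts, Int.toNat_of_nonneg (by omega)]
    have hFeq : F w = F ((p : R) ^ t * φ w) := by
      rw [map_mul, map_pow, map_natCast, hnt, ← key2, ← mul_assoc, ← zpow_add₀ hpL]
      simp
    have heq : w = (p : R) ^ t * φ w := hinj hFeq
    have hφw0 : φ w ≠ 0 := fun h => hw0 (φ.injective (by rw [h, map_zero]))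
    exact aux1 p k φ⁻¹ (φ w) hφw0 t ht1
      (by rw [← heq]; exact (φ.symm_apply_apply w).symm)
  · -- n > 0 : p^t * w = φ w
    set t := n.toNat with hts
    have ht1 : 1 ≤ t := by omega
    have hnt : (p : L) ^ (t : ℕ) = (p : L) ^ n := by
      rw [← zpow_natCast, hts, Int.toNat_of_nonneg (by omega)]
    have hFeq : F ((p : R) ^ t * w) = F (φ w) := by
      rw [map_mul, map_pow, map_natCast, hnt, key2]
    exact aux1 p k φ w hw0 t ht1 (hinj hFeq)

end aux

theorem stmt3 (p : ℕ) [Fact p.Prime] (k : Type*) [Field k] [CharP k p] [PerfectRing k p]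
    (r r' : ℕ) (s s' : ℤ) (hr : 1 ≤ r) (hr' : 1 ≤ r')
    (hrs : IsCoprime (r : ℤ) s) (hrs' : IsCoprime (r' : ℤ) s')
    (hne : (s : ℚ) / (r : ℚ) ≠ (s' : ℚ) / (r' : ℚ))
    (a : FractionRing (WittVector p k))
    (ha : (p : FractionRing (WittVector p k)) ^ (s * (r' : ℤ)) * a =
      (fracWittFrobenius p k ^ ((r : ℤ) * (r' : ℤ))) a *
        (p : FractionRing (WittVector p k)) ^ ((r : ℤ) * s')) :
    a = 0 := by
  have hn : s * (r' : ℤ) - (r : ℤ) * s' ≠ 0 := by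
    intro h
    apply hne
    have hr0 : (0 : ℚ) < (r : ℚ) := by exact_mod_cast hr
    have hr'0 : (0 : ℚ) < (r' : ℚ) := by exact_mod_cast hr'
    rw [div_eq_div_iff hr0.ne' hr'0.ne']
    have h2 : (s : ℤ) * r' = (r : ℤ) * s' := by omega
    have h3 := congrArg (Int.cast : ℤ → ℚ) h2
    push_cast at h3
    linarith
  have hpR : (p : WittVector p k) ≠ 0 := (WittVector.irreducible p (k := k)).ne_zero
  have hpL : (p : FractionRing (WittVector p k)) ≠ 0 := by
    have h1 : algebraMap (WittVector p k) (FractionRing (WittVector p k)) (p : WittVector p k)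
        = (p : FractionRing (WittVector p k)) := map_natCast _ _
    rw [← h1]
    exact fun h => hpR ((IsFractionRing.injective _ _) (by rw [h, map_zero]))
  refine key_lemma p k ((r : ℤ) * (r' : ℤ)) (s * (r' : ℤ) - (r : ℤ) * s') hn a ?_
  rw [zpow_sub₀ hpL, div_mul_eq_mul_div, div_eq_iff (zpow_ne_zero _ hpL)]
  linear_combination ha
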